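/- Let 𝒳, 𝒴, 𝒮 be finite nonempty sets and let T assign to each i,k ∈ 𝒮, y ∈ 𝒴, x ∈ 𝒳 a nonnegative real T_{ik}^{y|x} with ∑_{k∈𝒮} ∑_{y∈𝒴} T_{ik}^{y|x} = 1 for every i ∈ 𝒮 and x ∈ 𝒳. For each i ∈ 𝒮 define the quantum causal state s_i as the vector in the real Euclidean space indexed by functions g : 𝒳 → 𝒴 × 𝒮 whose coordinate at g is ∏_{x∈𝒳} √(T_{i,(g x).2}^{(g x).1 | x}). Then the quantum causal states are pairwise orthogonal (⟨s_i, s_j⟩ = 0 for all i ≠ j) if and only if for every pair i ≠ j in 𝒮 there exists x ∈ 𝒳 such that T_{ik}^{y|x} · T_{jk}^{y|x} = 0 for all y ∈ 𝒴 and all k ∈ 𝒮. -/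

import Mathlib

open scoped InnerProductSpace

private lemma inner_eq {𝒳 𝒴 𝒮 : Type*} [Fintype 𝒳] [Fintype 𝒴] [Fintype 𝒮]
    [DecidableEq 𝒳]
    (T : 𝒮 → 𝒮 → 𝒴 → 𝒳 → ℝ)
    (s : 𝒮 → EuclideanSpace ℝ (𝒳 → 𝒴 × 𝒮))
    (hs : ∀ i g, s i g = ∏ x : 𝒳, Real.sqrt (T i (g x).2 (g x).1 x))
    (i j : 𝒮) :
    ⟪s i, s j⟫_ℝ = ∏ x : 𝒳, ∑ p : 𝒴 × 𝒮,
      Real.sqrt (T i p.2 p.1 x) * Real.sqrt (T j p.2 p.1 x) := by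
  rw [PiLp.inner_apply]
  simp only [RCLike.inner_apply, starRingEnd_apply, star_trivial, hs]
  rw [Finset.prod_univ_sum]
  rw [← Fintype.piFinset_univ]
  exact Finset.sum_congr rfl fun g _ => by
    rw [← Finset.prod_mul_distrib]; exact Finset.prod_congr rfl fun _ _ => mul_comm _ _

/-- For stochastic transition elements `T`, the quantum causal states
`s i`, with coordinate `∏_x √(T_{i,(g x).2}^{(g x).1 | x})` at `g : 𝒳 → 𝒴 × 𝒮`,
are pairwise orthogonal iff for every pair `i ≠ j` there exists an input `x` with
`T_{ik}^{y|x} T_{jk}^{y|x} = 0` for all `y, k`. -/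
theorem stmt1 {𝒳 𝒴 𝒮 : Type*} [Fintype 𝒳] [Fintype 𝒴] [Fintype 𝒮]
    [DecidableEq 𝒳] [DecidableEq 𝒴] [DecidableEq 𝒮]
    [Nonempty 𝒳] [Nonempty 𝒴] [Nonempty 𝒮]
    (T : 𝒮 → 𝒮 → 𝒴 → 𝒳 → ℝ) (hT : ∀ i k y x, 0 ≤ T i k y x)
    (hstoch : ∀ i x, ∑ k : 𝒮, ∑ y : 𝒴, T i k y x = 1)
    (s : 𝒮 → EuclideanSpace ℝ (𝒳 → 𝒴 × 𝒮))
    (hs : ∀ i g, s i g = ∏ x : 𝒳, Real.sqrt (T i (g x).2 (g x).1 x)) :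
    (∀ i j : 𝒮, i ≠ j → ⟪s i, s j⟫_ℝ = 0) ↔
      (∀ i j : 𝒮, i ≠ j →
        ∃ x : 𝒳, ∀ y : 𝒴, ∀ k : 𝒮, T i k y x * T j k y x = 0) := by
  have key : ∀ i j : 𝒮, (⟪s i, s j⟫_ℝ = 0 ↔
      ∃ x : 𝒳, ∀ y : 𝒴, ∀ k : 𝒮, T i k y x * T j k y x = 0) := by
    intro i j
    rw [inner_eq T s hs i j, Finset.prod_eq_zero_iff]
    constructor
    · rintro ⟨x, -, hx⟩
      refine ⟨x, fun y k => ?_⟩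
      have h0 : ∀ p ∈ (Finset.univ : Finset (𝒴 × 𝒮)),
          0 ≤ Real.sqrt (T i p.2 p.1 x) * Real.sqrt (T j p.2 p.1 x) :=
        fun p _ => mul_nonneg (Real.sqrt_nonneg _) (Real.sqrt_nonneg _)
      have := (Finset.sum_eq_zero_iff_of_nonneg h0).mp hx (y, k) (Finset.mem_univ _)
      have h2 : Real.sqrt (T i k y x * T j k y x) = 0 := by
        rwa [Real.sqrt_mul (hT i k y x)]
      have := Real.sqrt_eq_zero (mul_nonneg (hT i k y x) (hT j k y x)) |>.mp h2
      exact this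
    · rintro ⟨x, hx⟩
      refine ⟨x, Finset.mem_univ _, Finset.sum_eq_zero fun p _ => ?_⟩
      rw [← Real.sqrt_mul (hT i p.2 p.1 x), hx p.1 p.2, Real.sqrt_zero]
  exact ⟨fun h i j hij => (key i j).mp (h i j hij),
    fun h i j hij => (key i j).mpr (h i j hij)⟩
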